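/- Description of the Grassmann necklace via π-implication: for every a ∈ ℤ, the a-minimal basis I→_a, viewed as a k-element subset of {a, a+1, …, a+n−1}, is the disjoint union of the set { π(b) : b ∈ ℤ, a ⇒_π b } and the ≼_a-minimal subset S of {a, …, π(a)−1} such that the columns {A_s : s ∈ S} form a basis of span(A_a, A_{a+1}, …, A_{π(a)−1}). -/

import Mathlib

open scoped BigOperators

/-- The columns of `A` are `n`-periodic. -/
def ColPeriodic (k n : ℕ) (A : ℤ → Fin k → ℂ) : Prop :=
  ∀ a : ℤ, A (a + (n : ℤ)) = A a

/-- `A` has rank `k`, i.e. its columns span `ℂ^k`. -/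
def FullRank (k : ℕ) (A : ℤ → Fin k → ℂ) : Prop :=
  Submodule.span ℂ (Set.range A) = ⊤

/-- The Gale (componentwise) partial order on finite subsets of `ℤ` of equal
cardinality: `B ≼ C` iff they have the same cardinality and, for each `i`, the
`i`-th smallest element of `B` is at most the `i`-th smallest element of `C`
(equivalently, the counting condition below). -/
def galeLE (B C : Finset ℤ) : Prop :=
  B.card = C.card ∧
    ∀ t : ℤ, (B.filter fun x => t ≤ x).card ≤ (C.filter fun x => t ≤ x).card

/-- The columns of `A` indexed by `J` form a basis of `ℂ^k`. -/
def IsColBasis (k : ℕ) (A : ℤ → Fin k → ℂ) (J : Finset ℤ) : Prop :=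
  J.card = k ∧ LinearIndependent ℂ (fun j : (J : Set ℤ) => A (j : ℤ)) ∧
    Submodule.span ℂ (A '' (J : Set ℤ)) = ⊤

/-- `I` is the `≼_a`-minimal `k`-element subset of `{a, a+1, …, a+n-1}` whose
columns form a basis of `ℂ^k` (the `a`-minimal basis `I→_a`). -/
def IsMinBasis (k n : ℕ) (A : ℤ → Fin k → ℂ) (a : ℤ) (I : Finset ℤ) : Prop :=
  I ⊆ Finset.Ico a (a + (n : ℤ)) ∧ IsColBasis k A I ∧
    ∀ J : Finset ℤ, J ⊆ Finset.Ico a (a + (n : ℤ)) → IsColBasis k A J → galeLE I J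

/-- `I` is the `≼_{a+1}`-maximal `k`-element subset of `{a-n+1, …, a}` whose
columns form a basis of `ℂ^k` (the `a`-maximal basis `I←_a`).  Note that on
representatives in `{a-n+1, …, a}` the cyclic order `≺_{a+1}` agrees with the
usual order of `ℤ`. -/
def IsMaxBasis (k n : ℕ) (A : ℤ → Fin k → ℂ) (a : ℤ) (I : Finset ℤ) : Prop :=
  I ⊆ Finset.Ioc (a - (n : ℤ)) a ∧ IsColBasis k A I ∧
    ∀ J : Finset ℤ, J ⊆ Finset.Ioc (a - (n : ℤ)) a → IsColBasis k A J → galeLE J I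

/-- The standard symmetric bilinear form `⟨x|y⟩ = ∑ i, x i * y i` on `ℂ^k`. -/
noncomputable def bil (k : ℕ) (x y : Fin k → ℂ) : ℂ := ∑ i, x i * y i

/-- `π` is the bounded affine permutation of `A`:
`π a` is the least `r` with `a ≤ r ≤ a + n` and `A a ∈ span(A (a+1), …, A r)`. -/
def IsBAP (k n : ℕ) (A : ℤ → Fin k → ℂ) (π : ℤ → ℤ) : Prop :=
  ∀ a : ℤ,
    a ≤ π a ∧ π a ≤ a + (n : ℤ) ∧
    A a ∈ Submodule.span ℂ (A '' Set.Ioc a (π a)) ∧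
    ∀ r : ℤ, a ≤ r → r ≤ a + (n : ℤ) →
      A a ∈ Submodule.span ℂ (A '' Set.Ioc a r) → π a ≤ r

/-- `T` is the right twist `τ→(A)`: for each `a`, the column `T a` pairs to `1`
with `A a` and to `0` with the other columns of the `a`-minimal basis. -/
def IsRightTwist (k n : ℕ) (A T : ℤ → Fin k → ℂ) : Prop :=
  ∀ (a : ℤ) (I : Finset ℤ), IsMinBasis k n A a I →
    ∀ b ∈ I, bil k (T a) (A b) = if b = a then 1 else 0

/-- `T` is the left twist `τ←(A)`: for each `a`, the column `T a` pairs to `1`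
with `A a` and to `0` with the other columns of the `a`-maximal basis. -/
def IsLeftTwist (k n : ℕ) (A T : ℤ → Fin k → ℂ) : Prop :=
  ∀ (a : ℤ) (I : Finset ℤ), IsMaxBasis k n A a I →
    ∀ b ∈ I, bil k (T a) (A b) = if b = a then 1 else 0

/-- `Δ_I(A)`, where `I = {i 0 < i 1 < ⋯ < i (k-1)}` is given by a strictly
monotone enumeration `i : Fin k → ℤ`: the determinant of the `k×k` matrix with
columns `A (i 0), …, A (i (k-1))`. -/
noncomputable def Delta (k : ℕ) (A : ℤ → Fin k → ℂ) (i : Fin k → ℤ) : ℂ :=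
  Matrix.det (Matrix.of fun r s : Fin k => A (i s) r)

namespace NecklaceAux

open Submodule

variable {k : ℕ}

lemma indep_mono {A : ℤ → Fin k → ℂ} {S T : Finset ℤ} (h : S ⊆ T)
    (hT : LinearIndependent ℂ (fun j : (T : Set ℤ) => A (j : ℤ))) :
    LinearIndependent ℂ (fun j : (S : Set ℤ) => A (j : ℤ)) :=
  hT.comp (Set.inclusion (Finset.coe_subset.2 h)) (Set.inclusion_injective _)

lemma card_eq_finrank {A : ℤ → Fin k → ℂ} {S : Finset ℤ}
    (h : LinearIndependent ℂ (fun j : (S : Set ℤ) => A (j : ℤ))) :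
    S.card = Module.finrank ℂ (Submodule.span ℂ (A '' (S : Set ℤ))) := by
  have := finrank_span_eq_card h
  rw [← Set.image_eq_range] at this
  simpa using this.symm

lemma span_exchange {M : Type*} [AddCommGroup M] [Module ℂ M] {x y : M} {s : Set M}
    (h : x ∈ Submodule.span ℂ (insert y s)) (hx : x ∉ Submodule.span ℂ s) :
    y ∈ Submodule.span ℂ (insert x s) := by
  rcases Submodule.mem_span_insert.1 h with ⟨c, z, hz, hxe⟩
  have hc : c ≠ 0 := by
    rintro rfl
    rw [zero_smul, zero_add] at hxe
    exact hx (hxe ▸ hz)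
  have hy : y = c⁻¹ • x + -(c⁻¹ • z) := by
    rw [hxe, smul_add, smul_smul, inv_mul_cancel₀ hc, one_smul]
    abel
  rw [hy]
  exact Submodule.add_mem _
    (Submodule.smul_mem _ _ (Submodule.subset_span (Set.mem_insert _ _)))
    (Submodule.neg_mem _ (Submodule.smul_mem _ _
      (Submodule.span_mono (Set.subset_insert _ _) hz)))

open Classical in
noncomputable def greedy (A : ℤ → Fin k → ℂ) (a t : ℤ) : Finset ℤ :=
  (Finset.Ico a t).filter (fun j => A j ∉ Submodule.span ℂ (A '' Set.Ico a j))

lemma mem_greedy {A : ℤ → Fin k → ℂ} {a t x : ℤ} :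
    x ∈ greedy A a t ↔ (a ≤ x ∧ x < t) ∧ A x ∉ Submodule.span ℂ (A '' Set.Ico a x) := by
  simp [greedy, Finset.mem_filter, Finset.mem_Ico]

lemma greedy_spec (A : ℤ → Fin k → ℂ) (a : ℤ) : ∀ t, a ≤ t →
    LinearIndependent ℂ (fun j : ((greedy A a t : Finset ℤ) : Set ℤ) => A (j : ℤ)) ∧
    Submodule.span ℂ (A '' ((greedy A a t : Finset ℤ) : Set ℤ)) =
      Submodule.span ℂ (A '' Set.Ico a t) := by
  refine Int.le_induction ?_ ?_
  · have hempty : greedy A a a = ∅ := by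
      ext x
      simp only [mem_greedy, Finset.notMem_empty, iff_false]
      rintro ⟨⟨h1, h2⟩, -⟩
      omega
    rw [hempty]
    refine ⟨?_, ?_⟩
    · haveI : IsEmpty ((∅ : Finset ℤ) : Set ℤ) := ⟨fun x => by simpa using x.2⟩
      exact linearIndependent_empty_type
    · rw [Set.Ico_self, Finset.coe_empty]
  · intro t ht ih
    obtain ⟨ih1, ih2⟩ := ih
    have hIco : Set.Ico a (t + 1) = insert t (Set.Ico a t) := by
      ext x; simp [Set.mem_Ico, Set.mem_insert_iff]; omega
    by_cases hmem : A t ∈ Submodule.span ℂ (A '' Set.Ico a t)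
    · have hg : greedy A a (t + 1) = greedy A a t := by
        ext x
        simp only [mem_greedy]
        constructor
        · rintro ⟨⟨h1, h2⟩, h3⟩
          have hx : x < t ∨ x = t := by omega
          rcases hx with hx | rfl
          · exact ⟨⟨h1, hx⟩, h3⟩
          · exact absurd hmem h3
        · rintro ⟨⟨h1, h2⟩, h3⟩
          exact ⟨⟨h1, by omega⟩, h3⟩
      rw [hg, hIco, Set.image_insert_eq, Submodule.span_insert_eq_span hmem]
      exact ⟨ih1, ih2⟩
    · have hg : greedy A a (t + 1) = insert t (greedy A a t) := by
        ext x
        simp only [mem_greedy, Finset.mem_insert]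
        constructor
        · rintro ⟨⟨h1, h2⟩, h3⟩
          have hx : x < t ∨ x = t := by omega
          rcases hx with hx | rfl
          · exact Or.inr ⟨⟨h1, hx⟩, h3⟩
          · exact Or.inl rfl
        · rintro (rfl | ⟨⟨h1, h2⟩, h3⟩)
          · exact ⟨⟨ht, by omega⟩, hmem⟩
          · exact ⟨⟨h1, by omega⟩, h3⟩
      have htG' : t ∉ ((greedy A a t : Finset ℤ) : Set ℤ) := by
        intro hx
        have := (mem_greedy.1 (by simpa using hx)).1.2
        omega
      have hnotspan : A t ∉ Submodule.span ℂ (A '' ((greedy A a t : Finset ℤ) : Set ℤ)) := by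
        rw [ih2]; exact hmem
      constructor
      · rw [hg]
        have h := (linearIndepOn_insert (f := A) htG').2 ⟨ih1, hnotspan⟩
        rwa [← Finset.coe_insert] at h
      · rw [hg, hIco]
        simp only [Finset.coe_insert, Set.image_insert_eq]
        rw [Submodule.span_insert, Submodule.span_insert, ih2]

lemma greedy_card {A : ℤ → Fin k → ℂ} {a t : ℤ} (ht : a ≤ t) :
    (greedy A a t).card = Module.finrank ℂ (Submodule.span ℂ (A '' Set.Ico a t)) := by
  rw [← (greedy_spec A a t ht).2]
  exact card_eq_finrank (greedy_spec A a t ht).1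

lemma card_le_greedy {A : ℤ → Fin k → ℂ} {a t : ℤ} (ht : a ≤ t) {J : Finset ℤ}
    (hJ : J ⊆ Finset.Ico a t)
    (hind : LinearIndependent ℂ (fun j : (J : Set ℤ) => A (j : ℤ))) :
    J.card ≤ (greedy A a t).card := by
  rw [greedy_card ht, card_eq_finrank hind]
  apply Submodule.finrank_mono
  apply Submodule.span_mono
  apply Set.image_mono
  intro x hx
  have := hJ hx
  simpa [Finset.mem_Ico] using this

lemma gale_greedy {A : ℤ → Fin k → ℂ} {a t : ℤ} (ht : a ≤ t) {J : Finset ℤ}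
    (hJ : J ⊆ Finset.Ico a t)
    (hind : LinearIndependent ℂ (fun j : (J : Set ℤ) => A (j : ℤ)))
    (hcard : J.card = (greedy A a t).card) :
    galeLE (greedy A a t) J := by
  classical
  refine ⟨hcard.symm, fun s => ?_⟩
  set u := max a (min s t) with hu
  have hau : a ≤ u := le_max_left _ _
  have hut : u ≤ t := max_le ht (min_le_right s t)
  have h2 : (greedy A a t).filter (fun x => ¬ s ≤ x) = greedy A a u := by
    ext x
    simp only [Finset.mem_filter, mem_greedy, not_le]
    constructor
    · rintro ⟨⟨⟨h1, h2⟩, h3⟩, h4⟩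
      exact ⟨⟨h1, by omega⟩, h3⟩
    · rintro ⟨⟨h1, h2⟩, h3⟩
      exact ⟨⟨⟨h1, by omega⟩, h3⟩, by omega⟩
  have h3 : J.filter (fun x => ¬ s ≤ x) ⊆ Finset.Ico a u := by
    intro x hx
    simp only [Finset.mem_filter, not_le] at hx
    have := hJ hx.1
    simp only [Finset.mem_Ico] at this ⊢
    omega
  have h4 := card_le_greedy hau h3 (indep_mono (Finset.filter_subset _ _) hind)
  have h5 := Finset.card_filter_add_card_filter_not
    (s := greedy A a t) (p := fun x => s ≤ x)
  have h6 := Finset.card_filter_add_card_filter_not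
    (s := J) (p := fun x => s ≤ x)
  rw [h2] at h5
  omega

lemma count_succ (B : Finset ℤ) (x : ℤ) :
    (B.filter (fun y => x ≤ y)).card =
      (B.filter (fun y => x + 1 ≤ y)).card + (if x ∈ B then 1 else 0) := by
  classical
  have hsplit : B.filter (fun y => x ≤ y) =
      (B.filter fun y => x + 1 ≤ y) ∪ B.filter (fun y => y = x) := by
    ext y
    simp only [Finset.mem_filter, Finset.mem_union]
    constructor
    · rintro ⟨hy, h⟩
      rcases (by omega : x + 1 ≤ y ∨ y = x) with h' | h'
      · exact Or.inl ⟨hy, h'⟩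
      · exact Or.inr ⟨hy, h'⟩
    · rintro (⟨hy, h⟩ | ⟨hy, h⟩) <;> exact ⟨hy, by omega⟩
  have hdisj : Disjoint (B.filter fun y => x + 1 ≤ y) (B.filter fun y => y = x) := by
    rw [Finset.disjoint_left]
    rintro y hy1 hy2
    simp only [Finset.mem_filter] at hy1 hy2
    omega
  rw [hsplit, Finset.card_union_of_disjoint hdisj, Finset.filter_eq']
  split <;> simp

lemma galeLE_antisymm {B C : Finset ℤ} (h1 : galeLE B C) (h2 : galeLE C B) : B = C := by
  classical
  have hc : ∀ t : ℤ, (B.filter fun x => t ≤ x).card = (C.filter fun x => t ≤ x).card :=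
    fun t => le_antisymm (h1.2 t) (h2.2 t)
  ext x
  have hB := count_succ B x
  have hC := count_succ C x
  have e1 := hc x
  have e2 := hc (x + 1)
  by_cases hxB : x ∈ B <;> by_cases hxC : x ∈ C <;>
    simp only [hxB, hxC, if_true, if_false] at hB hC <;>
    simp only [hxB, hxC, iff_true, iff_false, true_iff, false_iff] <;>
    first
      | omega
      | (intro hcon; omega)
      | exact hxC

lemma per_shift {n : ℕ} {A : ℤ → Fin k → ℂ} (hper : ColPeriodic k n A) (m c : ℤ) :
    A (c + m * (n : ℤ)) = A c := by
  have hp : Function.Periodic A ((n : ℕ) : ℤ) := hper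
  exact (hp.int_mul m) c

lemma span_window {n : ℕ} {A : ℤ → Fin k → ℂ} (hper : ColPeriodic k n A)
    (hrank : FullRank k A) (hn : 0 < n) (a : ℤ) :
    Submodule.span ℂ (A '' Set.Ico a (a + (n : ℤ))) = ⊤ := by
  refine top_unique ?_
  rw [← hrank]
  refine Submodule.span_le.2 ?_
  rintro _ ⟨c, rfl⟩
  have hn' : (0 : ℤ) < (n : ℤ) := by exact_mod_cast hn
  set q := (c - a) / (n : ℤ) with hq
  set r := (c - a) % (n : ℤ) with hr
  have h1 : 0 ≤ r := Int.emod_nonneg _ (by omega)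
  have h2 : r < (n : ℤ) := Int.emod_lt_of_pos _ hn'
  have h3 : (n : ℤ) * q + r = c - a := Int.mul_ediv_add_emod _ _
  have h4 : A c = A (a + r) := by
    rw [show c = (a + r) + q * (n : ℤ) by linarith]
    exact per_shift hper q (a + r)
  exact Submodule.subset_span ⟨a + r, ⟨by omega, by omega⟩, h4.symm⟩

lemma pi_self_mem {n : ℕ} {A : ℤ → Fin k → ℂ} {π : ℤ → ℤ} (hπ : IsBAP k n A π) (a : ℤ) :
    A (π a) ∈ Submodule.span ℂ (A '' Set.Ico a (π a)) := by
  obtain ⟨h1, h2, h3, h4⟩ := hπ a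
  rcases eq_or_lt_of_le h1 with heq | hlt
  · rw [← heq] at h3 ⊢
    simp only [Set.Ioc_self, Set.image_empty, Submodule.span_empty, Submodule.mem_bot] at h3
    rw [h3]
    exact Submodule.zero_mem _
  · have hIoc : Set.Ioc a (π a) = insert (π a) (Set.Ioo a (π a)) := by
      ext x; simp [Set.mem_Ioc, Set.mem_Ioo, Set.mem_insert_iff]; omega
    have hIoo : Set.Ioo a (π a) = Set.Ioc a (π a - 1) := by
      ext x; simp [Set.mem_Ioc, Set.mem_Ioo]
    have hnot : A a ∉ Submodule.span ℂ (A '' Set.Ioo a (π a)) := by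
      intro hcon
      have := h4 (π a - 1) (by omega) (by omega) (by rwa [← hIoo])
      omega
    have h3' : A a ∈ Submodule.span ℂ (insert (A (π a)) (A '' Set.Ioo a (π a))) := by
      rwa [hIoc, Set.image_insert_eq] at h3
    have hexch := span_exchange h3' hnot
    have hIcoeq : Set.Ico a (π a) = insert a (Set.Ioo a (π a)) := by
      ext x; simp [Set.mem_Ico, Set.mem_Ioo, Set.mem_insert_iff]; omega
    rwa [hIcoeq, Set.image_insert_eq]

lemma not_in_span_of_pi {n : ℕ} {A : ℤ → Fin k → ℂ} {π : ℤ → ℤ} (hπ : IsBAP k n A π)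
    {a b : ℤ} (hba : b < a) (haj : a ≤ π b) :
    A (π b) ∉ Submodule.span ℂ (A '' Set.Ico a (π b)) := by
  intro hcon
  obtain ⟨h1, h2, h3, h4⟩ := hπ b
  have hsub : Set.Ico a (π b) ⊆ Set.Ioo b (π b) := by
    intro x hx
    simp only [Set.mem_Ico] at hx
    simp only [Set.mem_Ioo]
    omega
  have hA : A (π b) ∈ Submodule.span ℂ (A '' Set.Ioo b (π b)) :=
    Submodule.span_mono (Set.image_mono hsub) hcon
  have hIoc : Set.Ioc b (π b) = insert (π b) (Set.Ioo b (π b)) := by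
    ext x; simp [Set.mem_Ioc, Set.mem_Ioo, Set.mem_insert_iff]; omega
  have h3' : A b ∈ Submodule.span ℂ (A '' Set.Ioo b (π b)) := by
    rw [hIoc, Set.image_insert_eq, Submodule.span_insert_eq_span hA] at h3
    exact h3
  have hIoo : Set.Ioo b (π b) = Set.Ioc b (π b - 1) := by
    ext x; simp [Set.mem_Ioc, Set.mem_Ioo]
  have := h4 (π b - 1) (by omega) (by omega) (by rwa [← hIoo])
  omega

lemma exists_pi_eq {n : ℕ} {A : ℤ → Fin k → ℂ} {π : ℤ → ℤ}
    (hper : ColPeriodic k n A) (hπ : IsBAP k n A π)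
    {a j : ℤ} (hn : 0 < n) (haj : a < j) (hj : j < a + (n : ℤ))
    (hnot : A j ∉ Submodule.span ℂ (A '' Set.Ico a j)) :
    ∃ b, j - (n : ℤ) ≤ b ∧ b < a ∧ π b = j := by
  have hn' : (0 : ℤ) < (n : ℤ) := by exact_mod_cast hn
  have hRbase : A j ∈ Submodule.span ℂ (A '' Set.Ico (j - (n : ℤ)) j) := by
    have hA : A (j - (n : ℤ)) = A j := by
      have := hper (j - (n : ℤ))
      rw [show j - (n : ℤ) + (n : ℤ) = j by ring] at this
      exact this.symm
    exact Submodule.subset_span ⟨j - (n : ℤ), ⟨le_refl _, by omega⟩, hA⟩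
  have hex : ∃ b, j - (n : ℤ) ≤ b ∧ b < a ∧
      A j ∈ Submodule.span ℂ (A '' Set.Ico b j) ∧
      A j ∉ Submodule.span ℂ (A '' Set.Ico (b + 1) j) := by
    by_contra hno
    push_neg at hno
    have hdesc : ∀ m : ℕ, j - (n : ℤ) ≤ a - (m : ℤ) →
        A j ∉ Submodule.span ℂ (A '' Set.Ico (a - (m : ℤ)) j) := by
      intro m
      induction m with
      | zero =>
          intro _
          simpa using hnot
      | succ p ih =>
          intro hge hcon
          push_cast at hge hcon
          have hb := hno (a - ((p : ℤ) + 1)) (by omega) (by omega) hcon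
          rw [show a - ((p : ℤ) + 1) + 1 = a - (p : ℤ) by ring] at hb
          exact ih (by omega) hb
    obtain ⟨m, hm⟩ : ∃ m : ℕ, (m : ℤ) = a - (j - (n : ℤ)) :=
      ⟨(a - (j - (n : ℤ))).toNat, Int.toNat_of_nonneg (by omega)⟩
    refine hdesc m (by omega) ?_
    rw [show a - (m : ℤ) = j - (n : ℤ) by omega]
    exact hRbase
  obtain ⟨b, hb1, hb2, hR1, hR2⟩ := hex
  have hbj : b < j := by omega
  have hIcob : Set.Ico b j = insert b (Set.Ico (b + 1) j) := by
    ext x; simp [Set.mem_Ico, Set.mem_insert_iff]; omega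
  have hR1' : A j ∈ Submodule.span ℂ (insert (A b) (A '' Set.Ico (b + 1) j)) := by
    rwa [hIcob, Set.image_insert_eq] at hR1
  have hgood := span_exchange hR1' hR2
  have hIoc : Set.Ioc b j = insert j (Set.Ico (b + 1) j) := by
    ext x; simp [Set.mem_Ioc, Set.mem_Ico, Set.mem_insert_iff]; omega
  have hgood1 : A b ∈ Submodule.span ℂ (A '' Set.Ioc b j) := by
    rwa [hIoc, Set.image_insert_eq]
  have hgood2 : A b ∉ Submodule.span ℂ (A '' Set.Ico (b + 1) j) := by
    intro hcon
    apply hR2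
    rw [hIcob, Set.image_insert_eq, Submodule.span_insert_eq_span hcon] at hR1
    exact hR1
  obtain ⟨p1, p2, p3, p4⟩ := hπ b
  have hle : π b ≤ j := p4 j (by omega) (by omega) hgood1
  have hge : j ≤ π b := by
    by_contra hlt
    push_neg at hlt
    have hsub : Set.Ioc b (π b) ⊆ Set.Ico (b + 1) j := by
      intro x hx
      simp only [Set.mem_Ioc] at hx
      simp only [Set.mem_Ico]
      omega
    exact hgood2 (Submodule.span_mono (Set.image_mono hsub) p3)
  exact ⟨b, hb1, hb2, le_antisymm hle hge⟩

end NecklaceAux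


/-- description of the Grassmann necklace via π-implication:
`I→_a` is the disjoint union of `{π b : a ⇒_π b}` (note every such `π b` lies
in `{a, …, a+n-1}`, indeed with `b ∈ (a-n, a)`) and the `≼_a`-minimal subset
`S` of `{a, …, π a - 1}` whose columns form a basis of
`span(A a, …, A (π a - 1))`. -/
theorem necklace_via_implication
    (k n : ℕ) (hk : 1 ≤ k) (hkn : k ≤ n)
    (A : ℤ → Fin k → ℂ) (hper : ColPeriodic k n A) (hrank : FullRank k A)
    (π : ℤ → ℤ) (hπ : IsBAP k n A π)
    (a : ℤ) (Ia : Finset ℤ) (hIa : IsMinBasis k n A a Ia)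
    (S : Finset ℤ)
    (hSsub : S ⊆ Finset.Ico a (π a))
    (hSind : LinearIndependent ℂ (fun s : (S : Set ℤ) => A (s : ℤ)))
    (hSspan : Submodule.span ℂ (A '' (S : Set ℤ)) =
      Submodule.span ℂ (A '' Set.Ico a (π a)))
    (hSmin : ∀ S' : Finset ℤ, S' ⊆ Finset.Ico a (π a) →
      LinearIndependent ℂ (fun s : (S' : Set ℤ) => A (s : ℤ)) →
      Submodule.span ℂ (A '' (S' : Set ℤ)) =
        Submodule.span ℂ (A '' Set.Ico a (π a)) →
      galeLE S S') :
    Ia = S ∪ (((Finset.Ioo (a - (n : ℤ)) a).filter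
        (fun b => b < a ∧ a ≤ π a ∧ π a < π b)).image π) ∧
    Disjoint S (((Finset.Ioo (a - (n : ℤ)) a).filter
        (fun b => b < a ∧ a ≤ π a ∧ π a < π b)).image π) := by
  classical
  obtain ⟨hIasub, hIabasis, hIamin⟩ := hIa
  obtain ⟨ha1, ha2, ha3, ha4⟩ := hπ a
  have hn : 0 < n := lt_of_lt_of_le hk hkn
  have hn' : (0 : ℤ) < (n : ℤ) := by exact_mod_cast hn
  have hfinrank : Module.finrank ℂ (Fin k → ℂ) = k := by simp
  have hwt : a ≤ a + (n : ℤ) := by omega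
  have hGspec := NecklaceAux.greedy_spec A a (a + (n : ℤ)) hwt
  have hGspan : Submodule.span ℂ (A '' ((NecklaceAux.greedy A a (a + (n : ℤ)) : Finset ℤ) : Set ℤ)) = ⊤ := by
    rw [hGspec.2]
    exact NecklaceAux.span_window hper hrank hn a
  have hGsub : NecklaceAux.greedy A a (a + (n : ℤ)) ⊆ Finset.Ico a (a + (n : ℤ)) := by
    intro x hx
    have := (NecklaceAux.mem_greedy.1 hx).1
    simp only [Finset.mem_Ico]
    omega
  have hGcard : (NecklaceAux.greedy A a (a + (n : ℤ))).card = k := by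
    rw [NecklaceAux.greedy_card hwt, NecklaceAux.span_window hper hrank hn a, finrank_top, hfinrank]
  have hGbasis : IsColBasis k A (NecklaceAux.greedy A a (a + (n : ℤ))) :=
    ⟨hGcard, hGspec.1, hGspan⟩
  have hg1 : galeLE Ia (NecklaceAux.greedy A a (a + (n : ℤ))) := hIamin _ hGsub hGbasis
  have hg2 : galeLE (NecklaceAux.greedy A a (a + (n : ℤ))) Ia :=
    NecklaceAux.gale_greedy hwt hIasub hIabasis.2.1 (hIabasis.1.trans hGcard.symm)
  have hIaG : Ia = NecklaceAux.greedy A a (a + (n : ℤ)) := NecklaceAux.galeLE_antisymm hg1 hg2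
  have hSspec := NecklaceAux.greedy_spec A a (π a) ha1
  have hGsub' : NecklaceAux.greedy A a (π a) ⊆ Finset.Ico a (π a) := by
    intro x hx
    have := (NecklaceAux.mem_greedy.1 hx).1
    simp only [Finset.mem_Ico]
    omega
  have hs1 : galeLE S (NecklaceAux.greedy A a (π a)) :=
    hSmin _ hGsub' hSspec.1 hSspec.2
  have hScard : S.card = (NecklaceAux.greedy A a (π a)).card := by
    rw [NecklaceAux.card_eq_finrank hSind, hSspan, NecklaceAux.greedy_card ha1]
  have hs2 : galeLE (NecklaceAux.greedy A a (π a)) S :=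
    NecklaceAux.gale_greedy ha1 hSsub hSind hScard
  have hSG : S = NecklaceAux.greedy A a (π a) := NecklaceAux.galeLE_antisymm hs1 hs2
  constructor
  · rw [hIaG, hSG]
    ext x
    simp only [Finset.mem_union, NecklaceAux.mem_greedy, Finset.mem_image]
    constructor
    · rintro ⟨⟨hx1, hx2⟩, hx3⟩
      rcases lt_trichotomy x (π a) with h | h | h
      · exact Or.inl ⟨⟨hx1, h⟩, hx3⟩
      · exact absurd (by rw [h]; exact NecklaceAux.pi_self_mem hπ a) hx3
      · obtain ⟨b, hb1, hb2, hb3⟩ := NecklaceAux.exists_pi_eq hper hπ hn (by omega) hx2 hx3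
        refine Or.inr ⟨b, ?_, hb3⟩
        simp only [Finset.mem_filter, Finset.mem_Ioo]
        exact ⟨⟨by omega, hb2⟩, hb2, ha1, by omega⟩
    · rintro (⟨⟨hx1, hx2⟩, hx3⟩ | ⟨b, hbmem, rfl⟩)
      · exact ⟨⟨hx1, by omega⟩, hx3⟩
      · simp only [Finset.mem_filter, Finset.mem_Ioo] at hbmem
        obtain ⟨⟨hb1, hb2⟩, _, _, hb5⟩ := hbmem
        obtain ⟨q1, q2, q3, q4⟩ := hπ b
        refine ⟨⟨by omega, by omega⟩, ?_⟩
        exact NecklaceAux.not_in_span_of_pi hπ hb2 (by omega)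
  · rw [Finset.disjoint_left]
    intro x hxS hxI
    rw [hSG] at hxS
    have h1 := (NecklaceAux.mem_greedy.1 hxS).1.2
    obtain ⟨b, hbmem, hbx⟩ := Finset.mem_image.1 hxI
    simp only [Finset.mem_filter, Finset.mem_Ioo] at hbmem
    omega
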